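/- Let b ≥ 2, φ = (1+√5)/2, H(x) = ((b^2-1)^{log_b φ}/√5)·x^{log_b φ}, a_k = (b^k-1)/(b^2-1) + ((1-(-1)^k)/2)·b/(b+1), and h the piecewise linear function through ((b^k-1)/(b^2-1), F_k). Then lim_{k→∞} |h(a_k) - H(a_k)| = 0. -/

import Mathlib

open Real

/-- ã_k = (b^k-1)/(b^2-1) as a real number. -/
noncomputable def atil (b k : ℕ) : ℝ := ((b : ℝ) ^ k - 1) / ((b : ℝ) ^ 2 - 1)

/-- `h` is the piecewise linear function through the points (a k, y k), k ≥ 0. -/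
def IsPLThrough (a y : ℕ → ℝ) (h : ℝ → ℝ) : Prop :=
  ∀ k : ℕ, ∀ x ∈ Set.Icc (a k) (a (k + 1)),
    h x = y k + (x - a k) * (y (k + 1) - y k) / (a (k + 1) - a k)

noncomputable def sig (k : ℕ) : ℝ := (1 - (-1 : ℝ) ^ k) / 2

noncomputable def xx (b k : ℕ) : ℝ := ((b : ℝ) ^ k - 1) + sig k * ((b : ℝ) ^ 2 - (b : ℝ))

lemma sig_even {k : ℕ} (hk : Even k) : sig k = 0 := by
  simp [sig, hk.neg_one_pow]

lemma sig_odd {k : ℕ} (hk : Odd k) : sig k = 1 := by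
  simp [sig, hk.neg_one_pow]

lemma sig_nonneg (k : ℕ) : 0 ≤ sig k := by
  rcases Nat.even_or_odd k with hk | hk
  · rw [sig_even hk]
  · rw [sig_odd hk]; norm_num

lemma sig_le_one (k : ℕ) : sig k ≤ 1 := by
  rcases Nat.even_or_odd k with hk | hk
  · rw [sig_even hk]; norm_num
  · rw [sig_odd hk]

lemma rpow_diff_le' {p x y : ℝ} (hp : p ≤ 1) (hy : 1 ≤ y) (hxy : y ≤ x) :
    x ^ p - y ^ p ≤ y ^ (p - 1) * (x - y) := by
  have hy0 : (0:ℝ) < y := lt_of_lt_of_le one_pos hy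
  have hx0 : (0:ℝ) < x := lt_of_lt_of_le hy0 hxy
  have h1 : (1:ℝ) ≤ x / y := (one_le_div hy0).mpr hxy
  have h2 : x ^ p = y ^ p * (x / y) ^ p := by
    rw [← Real.mul_rpow hy0.le (by positivity)]
    congr 1
    field_simp
  have h3 : (x / y) ^ p ≤ x / y := by
    calc (x/y)^p ≤ (x/y)^(1:ℝ) := Real.rpow_le_rpow_of_exponent_le h1 hp
    _ = x/y := Real.rpow_one _
  have h4 : y ^ p * (x/y) ^ p ≤ y ^ p * (x/y) :=
    mul_le_mul_of_nonneg_left h3 (Real.rpow_nonneg hy0.le p)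
  have h5 : y ^ (p-1) = y ^ p / y := by rw [Real.rpow_sub hy0, Real.rpow_one]
  rw [h2, h5]
  calc y ^ p * (x/y) ^ p - y ^ p ≤ y ^ p * (x/y) - y ^ p := by linarith
  _ = y ^ p / y * (x - y) := by field_simp

lemma aux_div (s d B C E : ℝ) (hC : C ≠ 0) (hE : E ≠ 0) :
    s * (B / C) * d / (E / C) = s * B * d / E := by
  field_simp

lemma aux_alg (B P Q F s : ℝ) (hQ : Q ≠ 0) (hs : s ≠ 0) :
    B * ((P * F + 1) / s) / Q = B * F / s * (P / Q) + B / s * (1 / Q) := by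
  field_simp

noncomputable def Gfun (b : ℕ) (α : ℝ) (k : ℕ) : ℝ :=
  (1 / Real.sqrt 5) * |goldenConj| ^ k
  + ((b:ℝ) * goldenRatio / Real.sqrt 5) * (goldenRatio / (b:ℝ)) ^ k
  + ((b:ℝ) / Real.sqrt 5) * (1 / (b:ℝ)) ^ k
  + ((b:ℝ)^2 / Real.sqrt 5) * ((b:ℝ)^k - 1) ^ (α - 1)

set_option maxHeartbeats 1000000 in
/-- lim_{k→∞} |h(a_k) - H(a_k)| = 0, where a_k = (b^k-1)/(b²-1) + ((1-(-1)^k)/2)·b/(b+1). -/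
theorem stmt18 (b : ℕ) (hb : 2 ≤ b) (h H : ℝ → ℝ)
    (hh : IsPLThrough (atil b) (fun k => (Nat.fib k : ℝ)) h)
    (hH : ∀ x : ℝ, H x = ((b : ℝ) ^ 2 - 1) ^ (Real.log goldenRatio / Real.log b)
      / Real.sqrt 5 * x ^ (Real.log goldenRatio / Real.log b))
    (a : ℕ → ℝ)
    (ha : ∀ k : ℕ, a k = atil b k
      + ((1 - (-1 : ℝ) ^ k) / 2) * ((b : ℝ) / ((b : ℝ) + 1))) :
    Filter.Tendsto (fun k : ℕ => |h (a k) - H (a k)|) Filter.atTop (nhds 0) := by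
  have hb2 : (2:ℝ) ≤ (b:ℝ) := by exact_mod_cast hb
  have hb1 : (1:ℝ) < (b:ℝ) := by linarith
  have hb0 : (0:ℝ) < (b:ℝ) := by linarith
  have hden : (0:ℝ) < (b:ℝ)^2 - 1 := by nlinarith
  have hbk : ∀ k : ℕ, (0:ℝ) < (b:ℝ)^k := fun k => pow_pos hb0 k
  have hs5 : (0:ℝ) < Real.sqrt 5 := Real.sqrt_pos.mpr (by norm_num)
  set α : ℝ := Real.log goldenRatio / Real.log b with hαdef
  have hα0 : 0 < α := div_pos (Real.log_pos one_lt_goldenRatio) (Real.log_pos hb1)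
  have hα1 : α < 1 := by
    rw [hαdef, div_lt_one (Real.log_pos hb1)]
    exact Real.log_lt_log goldenRatio_pos (lt_of_lt_of_le goldenRatio_lt_two hb2)
  -- b ^ α = φ
  have hbφ : (b:ℝ) ^ α = goldenRatio := by
    rw [Real.rpow_def_of_pos hb0, hαdef, mul_comm,
      div_mul_cancel₀ _ (Real.log_pos hb1).ne']
    exact Real.exp_log goldenRatio_pos
  have hφk : ∀ k : ℕ, ((b:ℝ)^k) ^ α = goldenRatio ^ k := by
    intro k
    rw [← Real.rpow_natCast (b:ℝ) k, ← Real.rpow_mul hb0.le, mul_comm,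
      Real.rpow_mul hb0.le, hbφ, Real.rpow_natCast]
  -- a k rewritten using sig
  have ha' : ∀ k, a k = atil b k + sig k * ((b:ℝ) / ((b:ℝ) + 1)) := by
    intro k; rw [ha]; rfl
  -- gap
  have hgap : ∀ k : ℕ, atil b (k+1) - atil b k = (b:ℝ)^k / ((b:ℝ) + 1) := by
    intro k
    unfold atil
    rw [pow_succ]
    field_simp
    ring
  -- membership
  have hmem : ∀ k : ℕ, a k ∈ Set.Icc (atil b k) (atil b (k+1)) := by
    intro k
    constructor
    · rw [ha' k]
      have : 0 ≤ sig k * ((b:ℝ) / ((b:ℝ) + 1)) :=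
        mul_nonneg (sig_nonneg k) (by positivity)
      linarith
    · rw [ha' k]
      have hle : sig k * ((b:ℝ) / ((b:ℝ) + 1)) ≤ (b:ℝ)^k / ((b:ℝ) + 1) := by
        rcases Nat.even_or_odd k with hk | hk
        · rw [sig_even hk, zero_mul]; positivity
        · rw [sig_odd hk, one_mul]
          exact div_le_div_of_nonneg_right (le_self_pow₀ hb1.le (Nat.pos_iff_ne_zero.mp hk.pos)) (by linarith)
      have := hgap k
      linarith
  -- value of h at a k
  have hhval : ∀ k : ℕ, h (a k)
      = (Nat.fib k : ℝ) + sig k * (b:ℝ) * ((Nat.fib (k+1) : ℝ) - (Nat.fib k : ℝ)) / (b:ℝ)^k := by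
    intro k
    rw [hh k (a k) (hmem k), hgap k, ha' k, add_sub_cancel_left]
    congr 1
    exact aux_div (sig k) _ _ _ _ (by positivity) (hbk k).ne'
  -- value of H at a k
  have hak : ∀ k, a k = xx b k / ((b:ℝ)^2 - 1) := by
    intro k
    rw [ha' k]
    unfold atil xx
    have hbp1 : (b:ℝ) + 1 ≠ 0 := by positivity
    field_simp
    ring
  have hxx_nonneg : ∀ k, 0 ≤ xx b k := by
    intro k
    unfold xx
    have h1 : (1:ℝ) ≤ (b:ℝ)^k := one_le_pow₀ hb1.le
    have h2 : 0 ≤ sig k * ((b:ℝ)^2 - (b:ℝ)) := mul_nonneg (sig_nonneg k) (by nlinarith)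
    linarith
  have hHval : ∀ k : ℕ, H (a k) = (xx b k) ^ α / Real.sqrt 5 := by
    intro k
    rw [hH (a k)]
    rw [div_mul_eq_mul_div]
    congr 1
    rw [← Real.mul_rpow hden.le
      (by rw [hak k]; exact div_nonneg (hxx_nonneg k) hden.le)]
    congr 1
    rw [hak k]
    field_simp
  -- the error formula
  have hE : ∀ k : ℕ, h (a k) - H (a k)
      = -(goldenConj ^ k) / Real.sqrt 5
        + sig k * (b:ℝ) * ((Nat.fib (k+1) : ℝ) - (Nat.fib k : ℝ)) / (b:ℝ)^k
        + (goldenRatio ^ k - (xx b k) ^ α) / Real.sqrt 5 := by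
    intro k
    rw [hhval k, hHval k, Real.coe_fib_eq k]
    ring
  have hψ : |goldenConj| < 1 := by
    rw [abs_lt]; exact ⟨neg_one_lt_goldenConj, by linarith [goldenConj_neg]⟩
  -- bound
  have hbound : ∀ k : ℕ, 1 ≤ k → |h (a k) - H (a k)| ≤ Gfun b α k := by
    intro k hk1
    rw [hE k]
    unfold Gfun
    have hbk1 : (2:ℝ) ≤ (b:ℝ)^k := le_trans hb2 (le_self_pow₀ hb1.le (by omega))
    have t1 : |(-(goldenConj ^ k)) / Real.sqrt 5| ≤ (1 / Real.sqrt 5) * |goldenConj| ^ k := by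
      rw [abs_div, abs_neg, abs_pow, abs_of_pos hs5]
      exact le_of_eq (by ring)
    have hfib1 : (Nat.fib (k+1) : ℝ) ≤ (goldenRatio ^ k * goldenRatio + 1) / Real.sqrt 5 := by
      rw [Real.coe_fib_eq]
      apply div_le_div_of_nonneg_right ?_ hs5.le
      have h1 : -(goldenConj ^ (k+1)) ≤ |goldenConj ^ (k+1)| := neg_le_abs _
      have h2 : |goldenConj ^ (k+1)| ≤ 1 := by
        rw [abs_pow]; exact pow_le_one₀ (abs_nonneg _) hψ.le
      have h3 : goldenRatio ^ (k+1) = goldenRatio ^ k * goldenRatio := pow_succ _ _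
      linarith
    have t2 : |sig k * (b:ℝ) * ((Nat.fib (k+1) : ℝ) - (Nat.fib k : ℝ)) / (b:ℝ)^k|
        ≤ ((b:ℝ) * goldenRatio / Real.sqrt 5) * (goldenRatio / (b:ℝ)) ^ k
          + ((b:ℝ) / Real.sqrt 5) * (1 / (b:ℝ)) ^ k := by
      have hfmono : (Nat.fib k : ℝ) ≤ (Nat.fib (k+1) : ℝ) := by
        exact_mod_cast Nat.fib_le_fib_succ
      have hfnn : (0:ℝ) ≤ (Nat.fib k : ℝ) := by positivity
      have habs : |sig k * (b:ℝ) * ((Nat.fib (k+1) : ℝ) - (Nat.fib k : ℝ)) / (b:ℝ)^k|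
          = sig k * (b:ℝ) * ((Nat.fib (k+1) : ℝ) - (Nat.fib k : ℝ)) / (b:ℝ)^k := by
        apply abs_of_nonneg
        apply div_nonneg ?_ (hbk k).le
        exact mul_nonneg (mul_nonneg (sig_nonneg k) hb0.le) (by linarith)
      rw [habs]
      have step1 : sig k * (b:ℝ) * ((Nat.fib (k+1) : ℝ) - (Nat.fib k : ℝ)) / (b:ℝ)^k
          ≤ (b:ℝ) * ((goldenRatio ^ k * goldenRatio + 1) / Real.sqrt 5) / (b:ℝ)^k := by
        apply div_le_div_of_nonneg_right ?_ (hbk k).le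
        calc sig k * (b:ℝ) * ((Nat.fib (k+1) : ℝ) - (Nat.fib k : ℝ))
            ≤ 1 * (b:ℝ) * ((Nat.fib (k+1) : ℝ) - (Nat.fib k : ℝ)) := by
              apply mul_le_mul_of_nonneg_right ?_ (by linarith)
              exact mul_le_mul_of_nonneg_right (sig_le_one k) hb0.le
          _ = (b:ℝ) * ((Nat.fib (k+1) : ℝ) - (Nat.fib k : ℝ)) := by ring
          _ ≤ (b:ℝ) * (Nat.fib (k+1) : ℝ) := by nlinarith
          _ ≤ (b:ℝ) * ((goldenRatio ^ k * goldenRatio + 1) / Real.sqrt 5) :=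
              mul_le_mul_of_nonneg_left hfib1 hb0.le
      refine step1.trans (le_of_eq ?_)
      have e1 : (goldenRatio/(b:ℝ))^k = goldenRatio^k/(b:ℝ)^k := div_pow _ _ _
      have e2 : ((1:ℝ)/(b:ℝ))^k = 1/(b:ℝ)^k := by rw [div_pow, one_pow]
      rw [e1, e2]
      exact aux_alg (b:ℝ) (goldenRatio ^ k) ((b:ℝ)^k) goldenRatio (Real.sqrt 5)
        (hbk k).ne' hs5.ne'
    have t3 : |goldenRatio ^ k - (xx b k) ^ α|
        ≤ (b:ℝ)^2 * ((b:ℝ)^k - 1) ^ (α - 1) := by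
      have hy1 : (1:ℝ) ≤ (b:ℝ)^k - 1 := by linarith
      have hy0 : (0:ℝ) < (b:ℝ)^k - 1 := by linarith
      have hrnn : (0:ℝ) ≤ ((b:ℝ)^k - 1) ^ (α - 1) := Real.rpow_nonneg hy0.le _
      rcases Nat.even_or_odd k with hke | hko
      · -- even: xx = b^k - 1
        have hxxe : xx b k = (b:ℝ)^k - 1 := by unfold xx; rw [sig_even hke]; ring
        rw [hxxe, ← hφk k]
        have hle : ((b:ℝ)^k - 1) ^ α ≤ ((b:ℝ)^k) ^ α :=
          Real.rpow_le_rpow (by linarith) (by linarith) hα0.le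
        rw [abs_of_nonneg (by linarith)]
        have hdd := rpow_diff_le' hα1.le hy1 (show (b:ℝ)^k - 1 ≤ (b:ℝ)^k by linarith)
        calc ((b:ℝ)^k) ^ α - ((b:ℝ)^k - 1) ^ α
            ≤ ((b:ℝ)^k - 1) ^ (α - 1) * ((b:ℝ)^k - ((b:ℝ)^k - 1)) := hdd
          _ = ((b:ℝ)^k - 1) ^ (α - 1) := by
              rw [show (b:ℝ)^k - ((b:ℝ)^k - 1) = 1 by ring, mul_one]
          _ ≤ (b:ℝ)^2 * ((b:ℝ)^k - 1) ^ (α - 1) := by nlinarith [hrnn, hb2]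
      · -- odd: xx = b^k - 1 + b^2 - b ≥ b^k
        have hxxo : xx b k = (b:ℝ)^k - 1 + ((b:ℝ)^2 - (b:ℝ)) := by
          unfold xx; rw [sig_odd hko]; ring
        have hxge : (b:ℝ)^k ≤ xx b k := by rw [hxxo]; nlinarith
        rw [← hφk k]
        have hle : ((b:ℝ)^k) ^ α ≤ (xx b k) ^ α :=
          Real.rpow_le_rpow (hbk k).le hxge hα0.le
        rw [abs_of_nonpos (by linarith), neg_sub]
        have hy1' : (1:ℝ) ≤ (b:ℝ)^k := by linarith
        have hdd := rpow_diff_le' hα1.le hy1' hxge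
        calc (xx b k) ^ α - ((b:ℝ)^k) ^ α
            ≤ ((b:ℝ)^k) ^ (α - 1) * (xx b k - (b:ℝ)^k) := hdd
          _ ≤ ((b:ℝ)^k - 1) ^ (α - 1) * (b:ℝ)^2 := by
              apply mul_le_mul
              · exact Real.rpow_le_rpow_of_nonpos hy0 (by linarith) (by linarith)
              · rw [hxxo]; nlinarith
              · rw [hxxo]; nlinarith
              · exact hrnn
          _ = (b:ℝ)^2 * ((b:ℝ)^k - 1) ^ (α - 1) := by ring
    have t3' : |(goldenRatio ^ k - (xx b k) ^ α) / Real.sqrt 5|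
        ≤ ((b:ℝ)^2 / Real.sqrt 5) * ((b:ℝ)^k - 1) ^ (α - 1) := by
      rw [abs_div, abs_of_pos hs5]
      calc |goldenRatio ^ k - (xx b k) ^ α| / Real.sqrt 5
          ≤ ((b:ℝ)^2 * ((b:ℝ)^k - 1) ^ (α - 1)) / Real.sqrt 5 :=
            div_le_div_of_nonneg_right t3 hs5.le
        _ = ((b:ℝ)^2 / Real.sqrt 5) * ((b:ℝ)^k - 1) ^ (α - 1) := by ring
    refine le_trans (abs_add_three _ _ _) ?_
    have final := add_le_add (add_le_add t1 t2) t3'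
    exact final.trans_eq (by ring)
  -- G tends to 0
  have hG0 : Filter.Tendsto (Gfun b α) Filter.atTop (nhds 0) := by
    unfold Gfun
    have T1 : Filter.Tendsto (fun k : ℕ => (1 / Real.sqrt 5) * |goldenConj| ^ k)
        Filter.atTop (nhds 0) := by
      simpa using (tendsto_pow_atTop_nhds_zero_of_abs_lt_one
        (by rwa [abs_abs])).const_mul (1 / Real.sqrt 5)
    have T2 : Filter.Tendsto
        (fun k : ℕ => ((b:ℝ) * goldenRatio / Real.sqrt 5) * (goldenRatio / (b:ℝ)) ^ k)
        Filter.atTop (nhds 0) := by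
      have habs : |goldenRatio / (b:ℝ)| < 1 := by
        rw [abs_of_pos (by positivity), div_lt_one hb0]
        linarith [goldenRatio_lt_two]
      simpa using (tendsto_pow_atTop_nhds_zero_of_abs_lt_one habs).const_mul
        ((b:ℝ) * goldenRatio / Real.sqrt 5)
    have T3 : Filter.Tendsto (fun k : ℕ => ((b:ℝ) / Real.sqrt 5) * (1 / (b:ℝ)) ^ k)
        Filter.atTop (nhds 0) := by
      have habs : |1 / (b:ℝ)| < 1 := by
        rw [abs_of_pos (by positivity), div_lt_one hb0]; linarith
      simpa using (tendsto_pow_atTop_nhds_zero_of_abs_lt_one habs).const_mul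
        ((b:ℝ) / Real.sqrt 5)
    have T4 : Filter.Tendsto
        (fun k : ℕ => ((b:ℝ)^2 / Real.sqrt 5) * ((b:ℝ)^k - 1) ^ (α - 1))
        Filter.atTop (nhds 0) := by
      have hinf : Filter.Tendsto (fun k : ℕ => (b:ℝ)^k - 1) Filter.atTop Filter.atTop := by
        have h1 := tendsto_pow_atTop_atTop_of_one_lt hb1
        have := Filter.tendsto_atTop_add_const_right Filter.atTop (-1) h1
        simpa [sub_eq_add_neg] using this
      have hr : Filter.Tendsto (fun x : ℝ => x ^ (α - 1)) Filter.atTop (nhds 0) := by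
        have := tendsto_rpow_neg_atTop (y := 1 - α) (by linarith)
        simpa [neg_sub] using this
      simpa using ((hr.comp hinf).const_mul ((b:ℝ)^2 / Real.sqrt 5))
    have := ((T1.add T2).add T3).add T4
    simpa using this
  -- conclude by squeezing
  apply squeeze_zero' (Filter.Eventually.of_forall (fun k => abs_nonneg _)) ?_ hG0
  filter_upwards [Filter.eventually_ge_atTop 1] with k hk
  exact hbound k hk
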